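/- arXiv:1807.08437 — 5 statements merged into one kernel-verified Lean document; each statement's English description precedes it below -/
import Mathlib

section
/- If (W,X,Y,Z,σ) satisfies the singular value equations of an algebraic curvature tensor with respect to a Lorentzian (pseudo-) inner product with ⟨W,W⟩ = ⟨X,X⟩ = ⟨Y,Y⟩ = 1 and ⟨Z,Z⟩ = −1, then σ = 0. -/
/-- Remark 2 (Lorentzian case): if the singular value equations hold with
respect to a nondegenerate symmetric bilinear form and
`⟨W,W⟩ = ⟨X,X⟩ = ⟨Y,Y⟩ = 1`, `⟨Z,Z⟩ = -1`, then `σ = 0`. -/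
theorem svp_lorentzian_sigma_zero
    {V : Type*} [AddCommGroup V] [Module ℝ V]
    (B : V →ₗ[ℝ] V →ₗ[ℝ] ℝ)
    (hsymm : ∀ u v : V, B u v = B v u)
    (hnondeg : ∀ u : V, (∀ v : V, B u v = 0) → u = 0)
    (R : V →ₗ[ℝ] V →ₗ[ℝ] V →ₗ[ℝ] V)
    (hanti1 : ∀ w x y z : V, B w (R y z x) = -B x (R y z w))
    (hanti2 : ∀ w x y z : V, B w (R y z x) = -B w (R z y x))
    (hpair : ∀ w x y z : V, B w (R y z x) = B y (R w x z))
    (W X Y Z : V) (σ : ℝ)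
    (hW : B W W = 1) (hX : B X X = 1) (hY : B Y Y = 1) (hZ : B Z Z = -1)
    (e1 : R Y Z X = σ • W) (e2 : R Z Y W = σ • X)
    (e3 : R W X Z = σ • Y) (e4 : R X W Y = σ • Z) :
    σ = 0 := by
  have h1 : B Z (R X W Y) = -σ := by
    rw [e4, map_smul, smul_eq_mul, hZ]; ring
  have h2 : B X (R Z Y W) = σ := by
    rw [e2, map_smul, smul_eq_mul, hX]; ring
  have h3 := hpair Z Y X W
  rw [h1, h2] at h3
  linarith
end

section
/- For the constant-curvature tensor R(X,Y)Z = κ(⟨Z,Y⟩X − ⟨Z,X⟩Y) with κ ≠ 0, every nonzero singular value σ of a singular 5-tuple of unit vectors satisfies σ = |κ|; in particular σ² = κ². -/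
open scoped RealInnerProductSpace

/-- Example 2: for the constant sectional curvature tensor with `κ ≠ 0`,
every nonzero singular value satisfies `σ² = κ²`, i.e. `σ = |κ|` if `σ ≥ 0`. -/
theorem svp_constant_curvature_sigma_abs
    {V : Type*} [NormedAddCommGroup V] [InnerProductSpace ℝ V]
    (κ : ℝ) (hκ : κ ≠ 0) (W X Y Z : V) (σ : ℝ)
    (hW : ‖W‖ = 1) (hX : ‖X‖ = 1) (hY : ‖Y‖ = 1) (hZ : ‖Z‖ = 1)
    (e1 : κ • (⟪X, Z⟫ • Y - ⟪X, Y⟫ • Z) = σ • W)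
    (e2 : κ • (⟪W, Y⟫ • Z - ⟪W, Z⟫ • Y) = σ • X)
    (e3 : κ • (⟪Z, X⟫ • W - ⟪Z, W⟫ • X) = σ • Y)
    (e4 : κ • (⟪Y, W⟫ • X - ⟪Y, X⟫ • W) = σ • Z)
    (hσ : σ ≠ 0) :
    σ ^ 2 = κ ^ 2 ∧ (0 ≤ σ → σ = |κ|) := by
  have nW : ⟪W, W⟫ = 1 := by
    rw [real_inner_self_eq_norm_sq, hW]; norm_num
  have nY : ⟪Y, Y⟫ = 1 := by
    rw [real_inner_self_eq_norm_sq, hY]; norm_num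
  have nZ : ⟪Z, Z⟫ = 1 := by
    rw [real_inner_self_eq_norm_sq, hZ]; norm_num
  -- take inner product of e3 with Z : get σ * ⟪Y,Z⟫ = 0
  have EA : κ * (⟪Z, X⟫ * ⟪W, Z⟫ - ⟪Z, W⟫ * ⟪X, Z⟫) = σ * ⟪Y, Z⟫ := by
    have h := congrArg (fun u : V => ⟪u, Z⟫) e3
    simpa [inner_sub_left, real_inner_smul_left, mul_sub] using h
  have he : ⟪Y, Z⟫ = 0 := by
    have h0 : σ * ⟪Y, Z⟫ = 0 := by
      rw [← EA, real_inner_comm Z X, real_inner_comm Z W]; ring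
    exact (mul_eq_zero.1 h0).resolve_left hσ
  -- inner product of e1 with Y, Z, W
  have E1 : κ * (⟪X, Z⟫ * ⟪Y, Y⟫ - ⟪X, Y⟫ * ⟪Z, Y⟫) = σ * ⟪W, Y⟫ := by
    have h := congrArg (fun u : V => ⟪u, Y⟫) e1
    simpa [inner_sub_left, real_inner_smul_left, mul_sub] using h
  have E2 : κ * (⟪X, Z⟫ * ⟪Y, Z⟫ - ⟪X, Y⟫ * ⟪Z, Z⟫) = σ * ⟪W, Z⟫ := by
    have h := congrArg (fun u : V => ⟪u, Z⟫) e1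
    simpa [inner_sub_left, real_inner_smul_left, mul_sub] using h
  have E0 : κ * (⟪X, Z⟫ * ⟪Y, W⟫ - ⟪X, Y⟫ * ⟪Z, W⟫) = σ * ⟪W, W⟫ := by
    have h := congrArg (fun u : V => ⟪u, W⟫) e1
    simpa [inner_sub_left, real_inner_smul_left, mul_sub] using h
  -- inner product of e2 with Z, Y
  have E3 : κ * (⟪W, Y⟫ * ⟪Z, Z⟫ - ⟪W, Z⟫ * ⟪Y, Z⟫) = σ * ⟪X, Z⟫ := by
    have h := congrArg (fun u : V => ⟪u, Z⟫) e2
    simpa [inner_sub_left, real_inner_smul_left, mul_sub] using h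
  have E4 : κ * (⟪W, Y⟫ * ⟪Z, Y⟫ - ⟪W, Z⟫ * ⟪Y, Y⟫) = σ * ⟪X, Y⟫ := by
    have h := congrArg (fun u : V => ⟪u, Y⟫) e2
    simpa [inner_sub_left, real_inner_smul_left, mul_sub] using h
  have hZY : ⟪Z, Y⟫ = 0 := by rw [real_inner_comm]; exact he
  rw [nY, hZY] at E1
  rw [nZ, he] at E2
  rw [nZ, he] at E3
  rw [nY, hZY] at E4
  rw [nW, real_inner_comm W Y, real_inner_comm W Z] at E0
  -- algebra
  have ha2 : σ ^ 2 * ⟪X, Z⟫ = κ ^ 2 * ⟪X, Z⟫ := by linear_combination (-σ) * E3 - κ * E1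
  have hb2 : σ ^ 2 * ⟪X, Y⟫ = κ ^ 2 * ⟪X, Y⟫ := by linear_combination (-σ) * E4 + κ * E2
  have hfin : σ * (σ ^ 2 - κ ^ 2) = 0 := by
    linear_combination κ * ⟪W, Y⟫ * ha2 - κ * ⟪W, Z⟫ * hb2 + (κ ^ 2 - σ ^ 2) * E0
  have hsq : σ ^ 2 = κ ^ 2 := by
    have := (mul_eq_zero.1 hfin).resolve_left hσ
    linarith
  refine ⟨hsq, fun hσ0 => ?_⟩
  calc σ = |σ| := (abs_of_nonneg hσ0).symm
    _ = Real.sqrt (σ ^ 2) := (Real.sqrt_sq_eq_abs σ).symm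
    _ = Real.sqrt (κ ^ 2) := by rw [hsq]
    _ = |κ| := Real.sqrt_sq_eq_abs κ
end

section
/- For the constant-curvature tensor R(X,Y)Z = κ(⟨Z,Y⟩X − ⟨Z,X⟩Y) with κ ≠ 0, any singular 5-tuple (W,X,Y,Z,σ) of unit vectors with σ ≠ 0 satisfies |⟨W,Y⟩| = |⟨X,Z⟩|, |⟨W,Z⟩| = |⟨X,Y⟩|, and ⟨W,Y⟩² + ⟨W,Z⟩² = 1. -/
open scoped RealInnerProductSpace

/-- Example 2: for the constant sectional curvature tensor with `κ ≠ 0` and a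
singular 5-tuple with `σ ≠ 0`, one has `|⟨W,Y⟩| = |⟨X,Z⟩|`, `|⟨W,Z⟩| = |⟨X,Y⟩|`
and `⟨W,Y⟩² + ⟨W,Z⟩² = 1`. -/
theorem svp_constant_curvature_inner_relations
    {V : Type*} [NormedAddCommGroup V] [InnerProductSpace ℝ V]
    (κ : ℝ) (hκ : κ ≠ 0) (W X Y Z : V) (σ : ℝ)
    (hW : ‖W‖ = 1) (hX : ‖X‖ = 1) (hY : ‖Y‖ = 1) (hZ : ‖Z‖ = 1)
    (e1 : κ • (⟪X, Z⟫ • Y - ⟪X, Y⟫ • Z) = σ • W)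
    (e2 : κ • (⟪W, Y⟫ • Z - ⟪W, Z⟫ • Y) = σ • X)
    (e3 : κ • (⟪Z, X⟫ • W - ⟪Z, W⟫ • X) = σ • Y)
    (e4 : κ • (⟪Y, W⟫ • X - ⟪Y, X⟫ • W) = σ • Z)
    (hσ : σ ≠ 0) :
    |⟪W, Y⟫| = |⟪X, Z⟫| ∧ |⟪W, Z⟫| = |⟪X, Y⟫| ∧
    ⟪W, Y⟫ ^ 2 + ⟪W, Z⟫ ^ 2 = 1 := by
  have hWW : ⟪W, W⟫ = (1:ℝ) := by
    rw [real_inner_self_eq_norm_sq, hW]; norm_num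
  have hXX : ⟪X, X⟫ = (1:ℝ) := by
    rw [real_inner_self_eq_norm_sq, hX]; norm_num
  set a := ⟪W, Y⟫ with ha
  set b := ⟪W, Z⟫ with hb
  set c := ⟪X, Y⟫ with hc
  set d := ⟪X, Z⟫ with hd
  have hYW : ⟪Y, W⟫ = a := (real_inner_comm Y W).symm
  have hZW : ⟪Z, W⟫ = b := (real_inner_comm Z W).symm
  have hYX : ⟪Y, X⟫ = c := (real_inner_comm Y X).symm
  have hZX : ⟪Z, X⟫ = d := (real_inner_comm Z X).symm
  -- scalar equations from inner products
  have h1 := congrArg (fun u => ⟪u, X⟫) e1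
  have h2 := congrArg (fun u => ⟪u, Z⟫) e3
  simp only [inner_sub_left, real_inner_smul_left, smul_sub, hYW, hZW, hYX, hZX,
    hWW, hXX, ← ha, ← hb, ← hc, ← hd] at h1 h2
  -- h1 : κ * (d * c) - κ * (c * d) = σ * ⟪W, X⟫
  have hp : ⟪W, X⟫ = 0 := by
    have : σ * ⟪W, X⟫ = 0 := by linarith [h1]
    exact (mul_eq_zero.1 this).resolve_left hσ
  have hq : ⟪Y, Z⟫ = 0 := by
    have : σ * ⟪Y, Z⟫ = 0 := by linarith [h2]
    exact (mul_eq_zero.1 this).resolve_left hσ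
  have hXW : ⟪X, W⟫ = 0 := by rw [real_inner_comm]; exact hp
  have h3 := congrArg (fun u => ⟪u, W⟫) e3
  have h4 := congrArg (fun u => ⟪u, X⟫) e4
  have h5 := congrArg (fun u => ⟪u, X⟫) e3
  have h6 := congrArg (fun u => ⟪u, W⟫) e4
  have h7 := congrArg (fun u => ⟪u, X⟫) e2
  simp only [inner_sub_left, real_inner_smul_left, smul_sub, hYW, hZW, hYX, hZX,
    hWW, hXX, hp, hXW, hq, ← ha, ← hb, ← hc, ← hd, mul_zero, mul_one, sub_zero,
    zero_sub] at h3 h4 h5 h6 h7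
  -- h3 : κ * d = σ * a ; h4 : κ * a = σ * d ; h5 : -(κ * b) = σ * c
  -- h6 : -(κ * c) = σ * b ; h7 : κ * (a * d) - κ * (b * c) = σ * 1
  have hσ2 : σ ^ 2 = κ ^ 2 * (a ^ 2 + b ^ 2) := by
    linear_combination (-σ) * h7 + (-(κ * a)) * h4 + (κ * b) * h5
  have hκσ : κ ^ 2 = σ ^ 2 := by
    by_contra h
    have ha0 : a = 0 := by
      have h' : (κ ^ 2 - σ ^ 2) * a = 0 := by linear_combination κ * h4 + σ * h3
      rcases mul_eq_zero.1 h' with h'' | h''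
      · exact absurd (by linarith : κ ^ 2 = σ ^ 2) h
      · exact h''
    have hb0 : b = 0 := by
      have h' : (κ ^ 2 - σ ^ 2) * b = 0 := by linear_combination (-κ) * h5 + σ * h6
      rcases mul_eq_zero.1 h' with h'' | h''
      · exact absurd (by linarith : κ ^ 2 = σ ^ 2) h
      · exact h''
    have : σ ^ 2 = 0 := by rw [hσ2, ha0, hb0]; ring
    exact hσ ((pow_eq_zero_iff (by norm_num)).1 this)
  have hκ2 : κ ^ 2 ≠ 0 := pow_ne_zero 2 hκ
  refine ⟨?_, ?_, ?_⟩
  · rw [← sq_eq_sq_iff_abs_eq_abs]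
    have h' : κ ^ 2 * (a ^ 2 - d ^ 2) = 0 := by
      linear_combination (κ * a + σ * d) * h4 + (-(d ^ 2)) * hκσ
    have h'' : a ^ 2 - d ^ 2 = 0 := by
      rcases mul_eq_zero.1 h' with h | h
      · exact absurd h hκ2
      · exact h
    linarith
  · rw [← sq_eq_sq_iff_abs_eq_abs]
    have h' : κ ^ 2 * (b ^ 2 - c ^ 2) = 0 := by
      linear_combination (-(κ * b) + σ * c) * h5 + (-(c ^ 2)) * hκσ
    have h'' : b ^ 2 - c ^ 2 = 0 := by
      rcases mul_eq_zero.1 h' with h | h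
      · exact absurd h hκ2
      · exact h
    linarith
  · have h' : κ ^ 2 * (a ^ 2 + b ^ 2) = κ ^ 2 * 1 := by
      linear_combination (-1 : ℝ) * hσ2 + (-1 : ℝ) * hκσ
    exact mul_left_cancel₀ hκ2 h'
end

section
/- With S and Λ = diag(A,B,C,D) as below, det(S ± iσΛ^{-1}) = det(S) + σ²·det(Λ^{-1})·(σ² + AB(2S^{01})² + AC(S^{20})² + AD(S^{30})² − CD(2S^{23})² − BD(S^{13})² − BC(S^{21})²) for any σ ∈ ℝ and nonzero A,B,C,D ∈ ℝ. -/
theorem det_fin_four' {R : Type*} [CommRing R] (M : Matrix (Fin 4) (Fin 4) R) :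
    M.det =
      M 0 0 * (M 1 1*(M 2 2*M 3 3 - M 2 3*M 3 2) - M 1 2*(M 2 1*M 3 3 - M 2 3*M 3 1) + M 1 3*(M 2 1*M 3 2 - M 2 2*M 3 1))
    - M 0 1 * (M 1 0*(M 2 2*M 3 3 - M 2 3*M 3 2) - M 1 2*(M 2 0*M 3 3 - M 2 3*M 3 0) + M 1 3*(M 2 0*M 3 2 - M 2 2*M 3 0))
    + M 0 2 * (M 1 0*(M 2 1*M 3 3 - M 2 3*M 3 1) - M 1 1*(M 2 0*M 3 3 - M 2 3*M 3 0) + M 1 3*(M 2 0*M 3 1 - M 2 1*M 3 0))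
    - M 0 3 * (M 1 0*(M 2 1*M 3 2 - M 2 2*M 3 1) - M 1 1*(M 2 0*M 3 2 - M 2 2*M 3 0) + M 1 2*(M 2 0*M 3 1 - M 2 1*M 3 0)) := by
  rw [Matrix.det_succ_row_zero]
  simp (config := { decide := true }) [Fin.sum_univ_succ, Matrix.det_fin_three, Fin.succAbove,
    Matrix.submatrix_apply, (show ((2:Fin 3).succ = (3:Fin 4)) by decide),
    (show ((2:Fin 3).castSucc = (2:Fin 4)) by decide)]
  ring

theorem of_mat_apply' {R : Type*} (M : Matrix (Fin 4) (Fin 4) R) (i j : Fin 4) :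
    Matrix.of M i j = M i j := rfl

theorem det_aux (a b c d e f A B C D σ s : ℝ)
    (hA : (A:ℂ) ≠ 0) (hB : (B:ℂ) ≠ 0) (hC : (C:ℂ) ≠ 0) (hD : (D:ℂ) ≠ 0)
    (hs : ((s:ℂ))^2 = ((σ:ℂ))^2) :
    (Matrix.of
      !![Complex.I * (s:ℂ) * (A:ℂ)⁻¹, 2*(a:ℂ), (b:ℂ), (c:ℂ);
         2*(a:ℂ), Complex.I * (s:ℂ) * (B:ℂ)⁻¹, (d:ℂ), (e:ℂ);
         (b:ℂ), -(d:ℂ), Complex.I * (s:ℂ) * (C:ℂ)⁻¹, 2*(f:ℂ);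
         (c:ℂ), -(e:ℂ), 2*(-(f:ℂ)), Complex.I * (s:ℂ) * (D:ℂ)⁻¹]).det =
    (Matrix.of
      !![(0:ℂ), 2*(a:ℂ), (b:ℂ), (c:ℂ);
         2*(a:ℂ), 0, (d:ℂ), (e:ℂ);
         (b:ℂ), -(d:ℂ), 0, 2*(f:ℂ);
         (c:ℂ), -(e:ℂ), 2*(-(f:ℂ)), 0]).det +
    ((σ:ℂ) ^ 2 * ((A:ℂ) * (B:ℂ) * (C:ℂ) * (D:ℂ))⁻¹ *
      ((σ:ℂ) ^ 2 + (A:ℂ) * (B:ℂ) * (2 * (a:ℂ)) ^ 2 + (A:ℂ) * (C:ℂ) * (b:ℂ) ^ 2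
        + (A:ℂ) * (D:ℂ) * (c:ℂ) ^ 2 - (C:ℂ) * (D:ℂ) * (2 * (f:ℂ)) ^ 2
        - (B:ℂ) * (D:ℂ) * (-(e:ℂ)) ^ 2 - (B:ℂ) * (C:ℂ) * (d:ℂ) ^ 2)) := by
  have hrw : (σ:ℂ) ^ 2 * ((A:ℂ) * (B:ℂ) * (C:ℂ) * (D:ℂ))⁻¹ *
      ((σ:ℂ) ^ 2 + (A:ℂ) * (B:ℂ) * (2 * (a:ℂ)) ^ 2 + (A:ℂ) * (C:ℂ) * (b:ℂ) ^ 2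
        + (A:ℂ) * (D:ℂ) * (c:ℂ) ^ 2 - (C:ℂ) * (D:ℂ) * (2 * (f:ℂ)) ^ 2
        - (B:ℂ) * (D:ℂ) * (-(e:ℂ)) ^ 2 - (B:ℂ) * (C:ℂ) * (d:ℂ) ^ 2) =
      (σ:ℂ)^4 * ((A:ℂ)⁻¹ * (B:ℂ)⁻¹ * (C:ℂ)⁻¹ * (D:ℂ)⁻¹)
      + (σ:ℂ)^2 * (4*(a:ℂ)^2 * ((C:ℂ)⁻¹*(D:ℂ)⁻¹) + (b:ℂ)^2 * ((B:ℂ)⁻¹*(D:ℂ)⁻¹)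
          + (c:ℂ)^2 * ((B:ℂ)⁻¹*(C:ℂ)⁻¹) - 4*(f:ℂ)^2 * ((A:ℂ)⁻¹*(B:ℂ)⁻¹)
          - (e:ℂ)^2 * ((A:ℂ)⁻¹*(C:ℂ)⁻¹) - (d:ℂ)^2 * ((A:ℂ)⁻¹*(D:ℂ)⁻¹)) := by
    have hA1 : (A:ℂ) * (A:ℂ)⁻¹ = 1 := mul_inv_cancel₀ hA
    have hB1 : (B:ℂ) * (B:ℂ)⁻¹ = 1 := mul_inv_cancel₀ hB
    have hC1 : (C:ℂ) * (C:ℂ)⁻¹ = 1 := mul_inv_cancel₀ hC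
    have hD1 : (D:ℂ) * (D:ℂ)⁻¹ = 1 := mul_inv_cancel₀ hD
    rw [mul_inv, mul_inv, mul_inv]
    linear_combination
      ((σ:ℂ)^2*4*(a:ℂ)^2*((C:ℂ)⁻¹*(D:ℂ)⁻¹) + (σ:ℂ)^2*(b:ℂ)^2*((B:ℂ)⁻¹*(D:ℂ)⁻¹)
        + (σ:ℂ)^2*(c:ℂ)^2*((B:ℂ)⁻¹*(C:ℂ)⁻¹)) * hA1
      + ((σ:ℂ)^2*4*(a:ℂ)^2*((C:ℂ)⁻¹*(D:ℂ)⁻¹)*((A:ℂ)*(A:ℂ)⁻¹)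
        - (σ:ℂ)^2*(e:ℂ)^2*((A:ℂ)⁻¹*(C:ℂ)⁻¹) - (σ:ℂ)^2*(d:ℂ)^2*((A:ℂ)⁻¹*(D:ℂ)⁻¹)) * hB1
      + ((σ:ℂ)^2*(b:ℂ)^2*((B:ℂ)⁻¹*(D:ℂ)⁻¹)*((A:ℂ)*(A:ℂ)⁻¹)
        - (σ:ℂ)^2*4*(f:ℂ)^2*((A:ℂ)⁻¹*(B:ℂ)⁻¹)
        - (σ:ℂ)^2*(d:ℂ)^2*((A:ℂ)⁻¹*(D:ℂ)⁻¹)*((B:ℂ)*(B:ℂ)⁻¹)) * hC1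
      + ((σ:ℂ)^2*(c:ℂ)^2*((B:ℂ)⁻¹*(C:ℂ)⁻¹)*((A:ℂ)*(A:ℂ)⁻¹)
        - (σ:ℂ)^2*4*(f:ℂ)^2*((A:ℂ)⁻¹*(B:ℂ)⁻¹)*((C:ℂ)*(C:ℂ)⁻¹)
        - (σ:ℂ)^2*(e:ℂ)^2*((A:ℂ)⁻¹*(C:ℂ)⁻¹)*((B:ℂ)*(B:ℂ)⁻¹)) * hD1
  rw [hrw, det_fin_four', det_fin_four']
  simp only [Fin.isValue, of_mat_apply', Matrix.of_apply, Matrix.cons_val', Matrix.cons_val_zero,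
    Matrix.cons_val_one, Matrix.head_cons, Matrix.cons_val_two, Matrix.cons_val_three,
    Nat.succ_eq_add_one, Nat.reduceAdd, Matrix.tail_cons, Matrix.empty_val',
    Matrix.cons_val_fin_one, Matrix.head_fin_const]
  linear_combination
    (((A:ℂ)⁻¹*(B:ℂ)⁻¹*(C:ℂ)⁻¹*(D:ℂ)⁻¹) * (σ:ℂ)^4 * (Complex.I^2 - 1)
      + (σ:ℂ)^2 * (-4*(a:ℂ)^2*((C:ℂ)⁻¹*(D:ℂ)⁻¹) - (b:ℂ)^2*((B:ℂ)⁻¹*(D:ℂ)⁻¹)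
          - (c:ℂ)^2*((B:ℂ)⁻¹*(C:ℂ)⁻¹) + 4*(f:ℂ)^2*((A:ℂ)⁻¹*(B:ℂ)⁻¹)
          + (e:ℂ)^2*((A:ℂ)⁻¹*(C:ℂ)⁻¹) + (d:ℂ)^2*((A:ℂ)⁻¹*(D:ℂ)⁻¹))) * Complex.I_sq
    + (((A:ℂ)⁻¹*(B:ℂ)⁻¹*(C:ℂ)⁻¹*(D:ℂ)⁻¹) * Complex.I^4 * ((s:ℂ)^2 + (σ:ℂ)^2)
      + Complex.I^2 * (-4*(a:ℂ)^2*((C:ℂ)⁻¹*(D:ℂ)⁻¹) - (b:ℂ)^2*((B:ℂ)⁻¹*(D:ℂ)⁻¹)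
          - (c:ℂ)^2*((B:ℂ)⁻¹*(C:ℂ)⁻¹) + 4*(f:ℂ)^2*((A:ℂ)⁻¹*(B:ℂ)⁻¹)
          + (e:ℂ)^2*((A:ℂ)⁻¹*(C:ℂ)⁻¹) + (d:ℂ)^2*((A:ℂ)⁻¹*(D:ℂ)⁻¹))) * hs

set_option maxHeartbeats 1000000 in
/-- Example 4: the determinant expansion
`det(S ± iσΛ⁻¹) = det(S) + σ²·det(Λ⁻¹)·(σ² + AB(2S⁰¹)² + AC(S²⁰)² + AD(S³⁰)²
− CD(2S²³)² − BD(S¹³)² − BC(S²¹)²)`. -/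
theorem schwarzschild_det_expansion (y z : Fin 4 → ℝ)
    (A B C D σ : ℝ) (hA : A ≠ 0) (hB : B ≠ 0) (hC : C ≠ 0) (hD : D ≠ 0)
    (Sc : Fin 4 → Fin 4 → ℝ) (hSc : ∀ i j, Sc i j = y i * z j - y j * z i)
    (S : Matrix (Fin 4) (Fin 4) ℝ)
    (hS : S = Matrix.of
      !![0,         2 * Sc 0 1, Sc 2 0,     Sc 3 0;
         2 * Sc 0 1, 0,         Sc 2 1,     Sc 3 1;
         Sc 2 0,     Sc 1 2,    0,          2 * Sc 2 3;
         Sc 3 0,     Sc 1 3,    2 * Sc 3 2, 0])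
    (Λinv : Matrix (Fin 4) (Fin 4) ℂ)
    (hΛinv : Λinv = Matrix.diagonal ![(A : ℂ)⁻¹, (B : ℂ)⁻¹, (C : ℂ)⁻¹, (D : ℂ)⁻¹]) :
    ∀ ε : ℝ, ε = 1 ∨ ε = -1 →
      (S.map (Complex.ofReal) + ((ε : ℂ) * Complex.I * (σ : ℂ)) • Λinv).det =
        (S.det : ℂ) +
        ((σ ^ 2 * (A * B * C * D)⁻¹ *
          (σ ^ 2 + A * B * (2 * Sc 0 1) ^ 2 + A * C * (Sc 2 0) ^ 2
            + A * D * (Sc 3 0) ^ 2 - C * D * (2 * Sc 2 3) ^ 2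
            - B * D * (Sc 1 3) ^ 2 - B * C * (Sc 2 1) ^ 2) : ℝ) : ℂ) := by
  intro ε hε
  have hA' : (A : ℂ) ≠ 0 := by exact_mod_cast hA
  have hB' : (B : ℂ) ≠ 0 := by exact_mod_cast hB
  have hC' : (C : ℂ) ≠ 0 := by exact_mod_cast hC
  have hD' : (D : ℂ) ≠ 0 := by exact_mod_cast hD
  subst hS hΛinv
  have h12 : Sc 1 2 = -Sc 2 1 := by rw [hSc, hSc]; ring
  have h13 : Sc 1 3 = -Sc 3 1 := by rw [hSc, hSc]; ring
  have h32 : Sc 3 2 = -Sc 2 3 := by rw [hSc, hSc]; ring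
  rw [h12, h13, h32]
  rcases hε with h | h <;> subst h
  · have hM : (Matrix.of
        !![0,         2 * Sc 0 1, Sc 2 0,     Sc 3 0;
           2 * Sc 0 1, 0,         Sc 2 1,     Sc 3 1;
           Sc 2 0,     -Sc 2 1,    0,          2 * Sc 2 3;
           Sc 3 0,     -Sc 3 1,    2 * -Sc 2 3, 0]).map (Complex.ofReal)
        + (((1:ℝ) : ℂ) * Complex.I * (σ : ℂ)) •
            Matrix.diagonal ![(A : ℂ)⁻¹, (B : ℂ)⁻¹, (C : ℂ)⁻¹, (D : ℂ)⁻¹] =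
        Matrix.of
          !![Complex.I * ((σ:ℝ):ℂ) * (A:ℂ)⁻¹, 2*((Sc 0 1:ℝ):ℂ), ((Sc 2 0:ℝ):ℂ), ((Sc 3 0:ℝ):ℂ);
             2*((Sc 0 1:ℝ):ℂ), Complex.I * ((σ:ℝ):ℂ) * (B:ℂ)⁻¹, ((Sc 2 1:ℝ):ℂ), ((Sc 3 1:ℝ):ℂ);
             ((Sc 2 0:ℝ):ℂ), -((Sc 2 1:ℝ):ℂ), Complex.I * ((σ:ℝ):ℂ) * (C:ℂ)⁻¹, 2*((Sc 2 3:ℝ):ℂ);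
             ((Sc 3 0:ℝ):ℂ), -((Sc 3 1:ℝ):ℂ), 2*(-((Sc 2 3:ℝ):ℂ)), Complex.I * ((σ:ℝ):ℂ) * (D:ℂ)⁻¹]
        := by
      ext i j
      fin_cases i <;> fin_cases j <;>
        simp [Matrix.diagonal, of_mat_apply'] <;> push_cast <;> ring
    rw [hM, det_aux (Sc 0 1) (Sc 2 0) (Sc 3 0) (Sc 2 1) (Sc 3 1) (Sc 2 3) A B C D σ σ
      hA' hB' hC' hD' rfl]
    rw [det_fin_four', det_fin_four']
    simp only [Fin.isValue, of_mat_apply', Matrix.of_apply, Matrix.cons_val', Matrix.cons_val_zero,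
      Matrix.cons_val_one, Matrix.head_cons, Matrix.cons_val_two, Matrix.cons_val_three,
      Nat.succ_eq_add_one, Nat.reduceAdd, Matrix.tail_cons, Matrix.empty_val',
      Matrix.cons_val_fin_one, Matrix.head_fin_const, Matrix.map_apply]
    push_cast
    ring
  · have hM : (Matrix.of
        !![0,         2 * Sc 0 1, Sc 2 0,     Sc 3 0;
           2 * Sc 0 1, 0,         Sc 2 1,     Sc 3 1;
           Sc 2 0,     -Sc 2 1,    0,          2 * Sc 2 3;
           Sc 3 0,     -Sc 3 1,    2 * -Sc 2 3, 0]).map (Complex.ofReal)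
        + ((((-1):ℝ) : ℂ) * Complex.I * (σ : ℂ)) •
            Matrix.diagonal ![(A : ℂ)⁻¹, (B : ℂ)⁻¹, (C : ℂ)⁻¹, (D : ℂ)⁻¹] =
        Matrix.of
          !![Complex.I * ((-σ:ℝ):ℂ) * (A:ℂ)⁻¹, 2*((Sc 0 1:ℝ):ℂ), ((Sc 2 0:ℝ):ℂ), ((Sc 3 0:ℝ):ℂ);
             2*((Sc 0 1:ℝ):ℂ), Complex.I * ((-σ:ℝ):ℂ) * (B:ℂ)⁻¹, ((Sc 2 1:ℝ):ℂ), ((Sc 3 1:ℝ):ℂ);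
             ((Sc 2 0:ℝ):ℂ), -((Sc 2 1:ℝ):ℂ), Complex.I * ((-σ:ℝ):ℂ) * (C:ℂ)⁻¹, 2*((Sc 2 3:ℝ):ℂ);
             ((Sc 3 0:ℝ):ℂ), -((Sc 3 1:ℝ):ℂ), 2*(-((Sc 2 3:ℝ):ℂ)), Complex.I * ((-σ:ℝ):ℂ) * (D:ℂ)⁻¹]
        := by
      ext i j
      fin_cases i <;> fin_cases j <;>
        simp [Matrix.diagonal, of_mat_apply'] <;> push_cast <;> ring
    rw [hM, det_aux (Sc 0 1) (Sc 2 0) (Sc 3 0) (Sc 2 1) (Sc 3 1) (Sc 2 3) A B C D σ (-σ)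
      hA' hB' hC' hD' (by push_cast; ring)]
    rw [det_fin_four', det_fin_four']
    simp only [Fin.isValue, of_mat_apply', Matrix.of_apply, Matrix.cons_val', Matrix.cons_val_zero,
      Matrix.cons_val_one, Matrix.head_cons, Matrix.cons_val_two, Matrix.cons_val_three,
      Nat.succ_eq_add_one, Nat.reduceAdd, Matrix.tail_cons, Matrix.empty_val',
      Matrix.cons_val_fin_one, Matrix.head_fin_const, Matrix.map_apply]
    push_cast
    ring
end

section
/- In the Schwarzschild curvature model, let A = r_s f(r)/(2r³), B = r_s/(2r³f(r)), C = r_s/(2r), D = (r_s/(2r))sin²θ with f(r) = 1 − r_s/r, r > r_s > 0, sinθ ≠ 0, and metric g = diag(−f, 1/f, r², r² sin²θ). Suppose x, y ∈ ℝ⁴ and σ ∈ ℝ satisfy the reduced system: C x²y⁰y² + D x³y⁰y³ = (σ/2)x⁰, C x²y¹y² + D x³y¹y³ = (σ/2)x¹, −A x⁰y⁰y² + B x¹y¹y² = (σ/2)x², −A x⁰y⁰y³ + B x¹y¹y³ = (σ/2)x³, together with the four analogous equations with x and y interchanged, and ⟨x,x⟩_g = ⟨y,y⟩_g = 1. Then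 either σ = 0 or σ² = (r_s/(2r³))². -/
set_option maxHeartbeats 1000000 in
/-- Example 4: in the Schwarzschild curvature model, solutions of the reduced
singular value system with both vectors of unit `g`-norm have `σ = 0` or
`σ² = (r_s/(2r³))²`. -/
theorem schwarzschild_reduced_svp
    (r rs θ : ℝ) (hrs : 0 < rs) (hr : rs < r) (hθ : Real.sin θ ≠ 0)
    (x y : Fin 4 → ℝ) (σ : ℝ)
    (f A B C D : ℝ)
    (hf : f = 1 - rs / r)
    (hA : A = rs * f / (2 * r ^ 3)) (hB : B = rs / (2 * r ^ 3 * f))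
    (hC : C = rs / (2 * r)) (hD : D = rs / (2 * r) * Real.sin θ ^ 2)
    (e1 : C * x 2 * y 0 * y 2 + D * x 3 * y 0 * y 3 = σ / 2 * x 0)
    (e2 : C * x 2 * y 1 * y 2 + D * x 3 * y 1 * y 3 = σ / 2 * x 1)
    (e3 : -A * x 0 * y 0 * y 2 + B * x 1 * y 1 * y 2 = σ / 2 * x 2)
    (e4 : -A * x 0 * y 0 * y 3 + B * x 1 * y 1 * y 3 = σ / 2 * x 3)
    (e5 : C * y 2 * x 0 * x 2 + D * y 3 * x 0 * x 3 = σ / 2 * y 0)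
    (e6 : C * y 2 * x 1 * x 2 + D * y 3 * x 1 * x 3 = σ / 2 * y 1)
    (e7 : -A * y 0 * x 0 * x 2 + B * y 1 * x 1 * x 2 = σ / 2 * y 2)
    (e8 : -A * y 0 * x 0 * x 3 + B * y 1 * x 1 * x 3 = σ / 2 * y 3)
    (hxnorm : -f * x 0 ^ 2 + x 1 ^ 2 / f + r ^ 2 * x 2 ^ 2
        + r ^ 2 * Real.sin θ ^ 2 * x 3 ^ 2 = 1)
    (hynorm : -f * y 0 ^ 2 + y 1 ^ 2 / f + r ^ 2 * y 2 ^ 2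
        + r ^ 2 * Real.sin θ ^ 2 * y 3 ^ 2 = 1) :
    σ = 0 ∨ σ ^ 2 = (rs / (2 * r ^ 3)) ^ 2 := by
  have hrpos : (0:ℝ) < r := hrs.trans hr
  have hrne : r ≠ 0 := ne_of_gt hrpos
  have hfpos : 0 < f := by
    rw [hf]
    have h1 : rs / r < 1 := (div_lt_one hrpos).mpr hr
    linarith
  have hfne : f ≠ 0 := ne_of_gt hfpos
  set k : ℝ := rs / (2 * r ^ 3) with hk
  have hkpos : 0 < k := by rw [hk]; positivity
  have hkne : k ≠ 0 := ne_of_gt hkpos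
  set R : ℝ := r ^ 2 * (x 2 * y 2 + Real.sin θ ^ 2 * (x 3 * y 3)) with hR
  set U : ℝ := -f * (x 0 * y 0) + x 1 * y 1 / f with hU
  have E1 : k * R * y 0 = σ / 2 * x 0 := by
    rw [← e1, hk, hR, hC, hD]; field_simp
  have E2 : k * R * y 1 = σ / 2 * x 1 := by
    rw [← e2, hk, hR, hC, hD]; field_simp
  have E3 : k * U * y 2 = σ / 2 * x 2 := by
    rw [← e3, hk, hU, hA, hB]; field_simp
  have E4 : k * U * y 3 = σ / 2 * x 3 := by
    rw [← e4, hk, hU, hA, hB]; field_simp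
  have E5 : k * R * x 0 = σ / 2 * y 0 := by
    rw [← e5, hk, hR, hC, hD]; field_simp
  have E6 : k * R * x 1 = σ / 2 * y 1 := by
    rw [← e6, hk, hR, hC, hD]; field_simp
  have E7 : k * U * x 2 = σ / 2 * y 2 := by
    rw [← e7, hk, hU, hA, hB]; field_simp
  have E8 : k * U * x 3 = σ / 2 * y 3 := by
    rw [← e8, hk, hU, hA, hB]; field_simp
  have hσ : σ / 2 = 2 * k * R * U := by
    linear_combination (-(σ/2)) * hxnorm + (f * x 0) * E1 - (x 1 / f) * E2
      - (r ^ 2 * x 2) * E3 - (r ^ 2 * Real.sin θ ^ 2 * x 3) * E4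
      + (k * R) * hU + (k * U) * hR
  by_cases hσ0 : σ = 0
  · exact Or.inl hσ0
  right
  have hσ2 : σ / 2 ≠ 0 := by
    intro h; exact hσ0 (by linarith)
  have hRU : R ≠ 0 ∧ U ≠ 0 := by
    constructor <;> intro h <;> rw [h] at hσ <;> simp at hσ <;> exact hσ0 hσ
  -- (σ/2)^2 = (k*R)^2
  have hx01 : x 0 ≠ 0 ∨ x 1 ≠ 0 := by
    by_contra h
    push_neg at h
    apply hRU.2
    rw [hU, h.1, h.2]; ring
  have h1 : (σ / 2) ^ 2 = (k * R) ^ 2 := by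
    rcases hx01 with h0 | h0
    · have key : (σ / 2) ^ 2 * x 0 = (k * R) ^ 2 * x 0 := by
        linear_combination (-(σ/2)) * E1 - (k * R) * E5
      exact mul_right_cancel₀ h0 key
    · have key : (σ / 2) ^ 2 * x 1 = (k * R) ^ 2 * x 1 := by
        linear_combination (-(σ/2)) * E2 - (k * R) * E6
      exact mul_right_cancel₀ h0 key
  have hx23 : x 2 ≠ 0 ∨ x 3 ≠ 0 := by
    by_contra h
    push_neg at h
    apply hRU.1
    rw [hR, h.1, h.2]; ring
  have h2 : (σ / 2) ^ 2 = (k * U) ^ 2 := by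
    rcases hx23 with h0 | h0
    · have key : (σ / 2) ^ 2 * x 2 = (k * U) ^ 2 * x 2 := by
        linear_combination (-(σ/2)) * E3 - (k * U) * E7
      exact mul_right_cancel₀ h0 key
    · have key : (σ / 2) ^ 2 * x 3 = (k * U) ^ 2 * x 3 := by
        linear_combination (-(σ/2)) * E4 - (k * U) * E8
      exact mul_right_cancel₀ h0 key
  have e : (σ / 2) ^ 4 = (k * R) ^ 2 * (k * U) ^ 2 := by
    rw [← h1, ← h2]; ring
  have e2' : (σ / 2) ^ 2 = 4 * k ^ 2 * R ^ 2 * U ^ 2 := by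
    linear_combination (σ / 2 + 2 * k * R * U) * hσ
  have key : (σ / 2) ^ 2 * (σ ^ 2 - k ^ 2) = 0 := by
    linear_combination 4 * e - k ^ 2 * e2'
  rcases mul_eq_zero.mp key with h | h
  · exact absurd (pow_eq_zero_iff (by norm_num) |>.mp h) hσ2
  · linarith [sub_eq_zero.mp h]
end
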